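/- Let t be a balanced weighted tournament on X and let u, v ∈ X be distinct with t(u,v) > 1/2. Then there exist k ≥ 3 and distinct elements x_0, …, x_{k−1} of X with x_0 = u, x_1 = v, t(x_i, x_{i+1}) > 1/2 for all i < k−1, and t(x_{k−1}, x_0) > 1/2. -/

import Mathlib

open scoped BigOperators

variable {X : Type*}

/-- A tournament on `X`: irreflexive and, on distinct points, exactly one direction holds. -/
def IsTournament (R : X → X → Prop) : Prop :=
  (∀ x, ¬ R x x) ∧ ∀ x y : X, x ≠ y → (R x y ↔ ¬ R y x)

/-- Out-degree of `x` in the relation `R`. -/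
noncomputable def valT (R : X → X → Prop) (x : X) : ℕ :=
  Set.ncard {y | R x y}

/-- A tournament is balanced if every out-degree equals `(n-1)/2`. -/
def IsBalanced [Fintype X] (R : X → X → Prop) : Prop :=
  ∀ x : X, (valT R x : ℝ) = ((Fintype.card X : ℝ) - 1) / 2

/-- Action of a permutation on a relation. -/
def permAct (π : Equiv.Perm X) (R : X → X → Prop) : X → X → Prop :=
  fun x y => R (π.symm x) (π.symm y)

/-- A set of relations closed under the permutation action. -/
def SymmetricSet (D : Set (X → X → Prop)) : Prop :=
  ∀ (π : Equiv.Perm X), ∀ R ∈ D, permAct π R ∈ D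

/-- The majority closure of a set of tournaments. -/
def majCl [Fintype X] (D : Set (X → X → Prop)) : Set (X → X → Prop) :=
  {d | IsTournament d ∧ ∃ w : (X → X → Prop) → ℝ,
    (∀ c, 0 ≤ w c ∧ w c ≤ 1) ∧
    (∀ c, w c ≠ 0 → c ∈ D) ∧
    (Function.support w).Finite ∧
    (∑ᶠ c, w c) = 1 ∧
    ∀ x y : X, x ≠ y →
      (d x y ↔ 1 / 2 < ∑ᶠ c ∈ {c : X → X → Prop | c ∈ D ∧ c x y}, w c)}

open Classical in
noncomputable def tOf (d : X → X → Prop) : X → X → ℝ :=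
  fun x y => if d x y then 1 else 0

/-- pr-cl: the convex hull of `{t[d] : d ∈ D}`. -/
noncomputable def prCl (D : Set (X → X → Prop)) : Set (X → X → ℝ) :=
  convexHull ℝ (tOf '' D)

/-- `t` is a weighted tournament. -/
def IsWeighted (t : X → X → ℝ) : Prop :=
  ∀ x y : X, x ≠ y → 0 ≤ t x y ∧ t x y ≤ 1 ∧ t y x = 1 - t x y

/-- A weighted tournament is balanced if each row sums to `(n-1)/2`. -/
def BalancedW [Fintype X] (t : X → X → ℝ) : Prop :=
  ∀ x : X, (∑ᶠ y ∈ {y : X | y ≠ x}, t x y) = ((Fintype.card X : ℝ) - 1) / 2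

/-- A tournament is pseudo-balanced if it is dominated by a balanced weighted tournament. -/
def PseudoBalanced [Fintype X] (c : X → X → Prop) : Prop :=
  ∃ t : X → X → ℝ, IsWeighted t ∧ BalancedW t ∧
    ∀ x y : X, x ≠ y → c x y → 1 / 2 < t x y

open Classical in
noncomputable def tConfig (x y : X) (a s0 s1 : ℝ) : X → X → ℝ :=
  fun u v =>
    if u = v then 0
    else if u = x ∧ v = y then a
    else if u = y ∧ v = x then 1 - a
    else if u = x then s0
    else if v = x then 1 - s0
    else if u = y then s1
    else if v = y then 1 - s1
    else 1 / 2

/-- `Prd_ℓ(𝒟)`. -/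
noncomputable def PrdL [Fintype X] (l : ℕ) (D : Set (X → X → Prop)) : Set (ℝ × ℝ) :=
  {p | ∃ c ∈ D, ∃ x y : X, x ≠ y ∧ (c x y ↔ l = 1) ∧
    p.1 = (Set.ncard {z : X | z ≠ x ∧ z ≠ y ∧ c x z} : ℝ) / ((Fintype.card X : ℝ) - 2) ∧
    p.2 = (Set.ncard {z : X | z ≠ x ∧ z ≠ y ∧ c y z} : ℝ) / ((Fintype.card X : ℝ) - 2)}

/-- `Pr_A(𝒟)`. -/
noncomputable def PrA [Fintype X] (A : Set ℝ) (D : Set (X → X → Prop)) : Set (ℝ × ℝ) :=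
  {p | 0 ≤ p.1 ∧ p.1 ≤ 1 ∧ 0 ≤ p.2 ∧ p.2 ≤ 1 ∧
    ∃ x y : X, x ≠ y ∧ ∃ a ∈ A, tConfig x y a p.1 p.2 ∈ prCl D}

/-- `V_ℓ(d)` as a subset of `ℝ²`. -/
noncomputable def Vset [Fintype X] (l : ℕ) (d : X → X → Prop) : Set (ℝ × ℝ) :=
  {p | ∃ x y : X, x ≠ y ∧ (if l = 1 then d x y else d y x) ∧
    p = ((valT d x : ℝ), (valT d y : ℝ))}

/-- `V*_ℓ(d)`. -/
noncomputable def VstarSet [Fintype X] (l : ℕ) (d : X → X → Prop) : Set (ℝ × ℝ) :=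
  {p | ∃ q ∈ Vset l d, p = (q.1 - (l : ℝ), q.2 - (1 - (l : ℝ)))}

open Classical in
noncomputable def tCycle (k : ℕ) (xs : ℕ → X) (a : ℝ) : X → X → ℝ :=
  fun u v =>
    if u = v then 0
    else if ∃ i < k, u = xs i ∧ v = xs ((i + 1) % k) then a
    else if ∃ i < k, v = xs i ∧ u = xs ((i + 1) % k) then 1 - a
    else 1 / 2

open Classical in
noncomputable def tTriple (x y z : X) : X → X → ℝ :=
  fun u v =>
    if u = v then 0
    else if (u, v) = (x, y) ∨ (u, v) = (y, z) ∨ (u, v) = (z, x) then 1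
    else if (u, v) = (y, x) ∨ (u, v) = (z, y) ∨ (u, v) = (x, z) then 0
    else 1 / 2

/-- The dual (reverse) tournament. -/
def dualT (c : X → X → Prop) : X → X → Prop := fun x y => c y x

/-- The symmetric closure (orbit) of a single tournament. -/
def symCl (c : X → X → Prop) : Set (X → X → Prop) :=
  {d | ∃ π : Equiv.Perm X, d = permAct π c}

section Aux

lemma mem_first_split {α : Type*} {a : α} : ∀ {l : List α}, a ∈ l → ∃ s t, l = s ++ a :: t ∧ a ∉ s := by
  intro l
  induction l with
  | nil => simp
  | cons x xs ih =>
    intro h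
    by_cases hx : a = x
    · exact ⟨[], xs, by simp [hx], by simp⟩
    · obtain ⟨s, t, rfl, hs⟩ := ih (by simpa [hx] using h)
      exact ⟨x :: s, t, by simp, by simp [hs, Ne.symm, hx]⟩

lemma not_nodup_split {α : Type*} : ∀ {l : List α}, ¬ l.Nodup → ∃ c l1 l2, l = l1 ++ c :: l2 ∧ c ∈ l2 := by
  intro l
  induction l with
  | nil => simp
  | cons x xs ih =>
    intro h
    rw [List.nodup_cons] at h
    push_neg at h
    by_cases hx : x ∈ xs
    · exact ⟨x, [], xs, by simp, hx⟩
    · obtain ⟨c, l1, l2, rfl, hc⟩ := ih (h hx)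
      exact ⟨c, x :: l1, l2, by simp, hc⟩

lemma chain_dedup {α : Type*} {R : α → α → Prop} (b : α) :
    ∀ n (a : α) (l0 : List α), a ≠ b → l0.length ≤ n → b ∉ l0 → List.Chain R a (l0 ++ [b]) →
    ∃ l0', List.Chain R a (l0' ++ [b]) ∧ (a :: (l0' ++ [b])).Nodup := by
  intro n
  induction n with
  | zero =>
    intro a l0 hab hlen hb hch
    rw [Nat.le_zero, List.length_eq_zero_iff] at hlen
    subst hlen
    exact ⟨[], hch, by simp [hab]⟩
  | succ n ih =>
    intro a l0 hab hlen hb hch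
    by_cases hnd : (a :: (l0 ++ [b])).Nodup
    · exact ⟨l0, hch, hnd⟩
    rw [List.nodup_cons] at hnd
    push_neg at hnd
    by_cases hmem : a ∈ l0 ++ [b]
    · have ha : a ∈ l0 := by
        rcases List.mem_append.mp hmem with h | h
        · exact h
        · simp at h; exact absurd h hab
      obtain ⟨m1, m2, rfl⟩ := List.append_of_mem ha
      rw [List.append_assoc, List.cons_append] at hch
      have h2 : List.Chain R a (m2 ++ [b]) := (List.isChain_cons_split.mp hch).2
      refine ih a m2 hab ?_ (fun h => hb (by simp [h])) h2
      have := hlen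
      simp [List.length_append] at this ⊢
      omega
    · have hl0 : ¬ l0.Nodup := by
        intro h
        exact (hnd hmem) (by simp [List.nodup_append, h, hb]; intro x hx hxb; exact hb (hxb ▸ hx))
      obtain ⟨c, m1, m2, rfl, hc⟩ := not_nodup_split hl0
      obtain ⟨m2a, m2b, rfl⟩ := List.append_of_mem hc
      have hsplit1 : List.Chain R a (m1 ++ [c]) ∧ List.Chain R c ((m2a ++ c :: m2b) ++ [b]) := by
        have h' : List.Chain R a (m1 ++ c :: ((m2a ++ c :: m2b) ++ [b])) := by
          simpa [List.append_assoc] using hch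
        exact List.isChain_cons_split.mp h'
      have hsplit2 : List.Chain R c (m2b ++ [b]) := by
        have := hsplit1.2
        rw [List.append_assoc, List.cons_append] at this
        exact (List.isChain_cons_split.mp this).2
      have hnew : List.Chain R a ((m1 ++ c :: m2b) ++ [b]) := by
        rw [List.append_assoc, List.cons_append]
        exact List.isChain_cons_split.mpr ⟨hsplit1.1, hsplit2⟩
      have hbnew : b ∉ m1 ++ c :: m2b := by
        intro h; apply hb; simp at h ⊢; tauto
      refine ih a (m1 ++ c :: m2b) hab ?_ hbnew hnew
      simp [List.length_append] at hlen ⊢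
      omega

open Finset in
lemma reach_aux {X : Type*} [Fintype X] (t : X → X → ℝ) (ht : IsWeighted t) (hbal : BalancedW t)
    (u v : X) (huv : u ≠ v) (htuv : 1 / 2 < t u v) :
    Relation.ReflTransGen (fun x y => x ≠ y ∧ 1 / 2 < t x y) v u := by
  classical
  set R : X → X → Prop := fun x y => x ≠ y ∧ 1 / 2 < t x y with hR
  by_contra hreach
  set S : Finset X := Finset.univ.filter (fun x => Relation.ReflTransGen R v x) with hS
  have hvS : v ∈ S := by simp [hS]; exact Relation.ReflTransGen.refl
  have huS : u ∉ S := by simp [hS]; exact hreach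
  have hcross : ∀ x ∈ S, ∀ y ∈ Sᶜ, t x y ≤ 1 / 2 := by
    intro x hx y hy
    by_contra hlt
    push_neg at hlt
    have hxy : x ≠ y := by rintro rfl; simp at hy; exact hy (by simpa using hx)
    have : y ∈ S := by
      simp only [hS, mem_filter, mem_univ, true_and] at hx ⊢
      exact hx.tail ⟨hxy, hlt⟩
    simp at hy; exact hy (by simpa [hS] using this)
  have hrow : ∀ x : X, ∑ y ∈ Finset.univ.erase x, t x y = ((Fintype.card X : ℝ) - 1) / 2 := by
    intro x
    rw [← hbal x, ← finsum_mem_coe_finset]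
    congr 1
    ext y; simp
  have hsplit : ∀ x ∈ S, Finset.univ.erase x = (S.erase x) ∪ Sᶜ := by
    intro x hx
    ext y
    simp only [mem_erase, mem_univ, and_true, mem_union, mem_compl]
    constructor
    · intro h; by_cases hy : y ∈ S
      · exact Or.inl ⟨h, hy⟩
      · exact Or.inr hy
    · rintro (⟨h, _⟩ | h)
      · exact h
      · rintro rfl; exact h hx
  have hdisj : ∀ x ∈ S, Disjoint (S.erase x) Sᶜ := by
    intro x _
    exact disjoint_compl_right.mono_left (erase_subset _ _)
  have hA : ∑ x ∈ S, ∑ y ∈ Finset.univ.erase x, t x y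
      = (S.card : ℝ) * (((Fintype.card X : ℝ) - 1) / 2) := by
    rw [Finset.sum_congr rfl (fun x _ => hrow x)]
    simp [mul_comm]
  have hIC : ∑ x ∈ S, ∑ y ∈ Finset.univ.erase x, t x y
      = (∑ x ∈ S, ∑ y ∈ S.erase x, t x y) + ∑ x ∈ S, ∑ y ∈ Sᶜ, t x y := by
    rw [← Finset.sum_add_distrib]
    refine Finset.sum_congr rfl (fun x hx => ?_)
    rw [hsplit x hx, Finset.sum_union (hdisj x hx)]
  have hswap : ∑ x ∈ S, ∑ y ∈ S.erase x, t x y = ∑ x ∈ S, ∑ y ∈ S.erase x, t y x := by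
    rw [Finset.sum_comm' (t' := S) (s' := fun y => S.erase y)]
    intro x y
    simp only [mem_erase]
    tauto
  have h2I : (∑ x ∈ S, ∑ y ∈ S.erase x, t x y) * 2
      = (S.card : ℝ) * ((S.card : ℝ) - 1) := by
    rw [mul_two]
    nth_rewrite 2 [hswap]
    rw [← Finset.sum_add_distrib]
    have heq : ∀ x ∈ S, (∑ y ∈ S.erase x, t x y + ∑ y ∈ S.erase x, t y x)
        = (S.card : ℝ) - 1 := by
      intro x hx
      rw [← Finset.sum_add_distrib]
      have hone : ∀ y ∈ S.erase x, t x y + t y x = 1 := by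
        intro y hy
        have hxy : x ≠ y := fun h => (mem_erase.mp hy).1 h.symm
        have := (ht x y hxy).2.2
        linarith
      rw [Finset.sum_congr rfl hone, Finset.sum_const, card_erase_of_mem hx]
      have h1 : 1 ≤ S.card := card_pos.mpr ⟨v, hvS⟩
      rw [nsmul_eq_mul, Nat.cast_sub h1]
      push_cast
      ring
    rw [Finset.sum_congr rfl heq]
    simp [mul_comm]; ring
  have hC : ∑ x ∈ S, ∑ y ∈ Sᶜ, t x y < (S.card : ℝ) * ((Sᶜ.card : ℝ) * (1/2)) := by
    have hbound : ∀ x ∈ S, ∑ y ∈ Sᶜ, t x y ≤ (Sᶜ.card : ℝ) * (1/2) := by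
      intro x hx
      calc ∑ y ∈ Sᶜ, t x y ≤ ∑ y ∈ Sᶜ, (1/2 : ℝ) :=
            Finset.sum_le_sum (fun y hy => hcross x hx y hy)
        _ = (Sᶜ.card : ℝ) * (1/2) := by simp
    have huc : u ∈ Sᶜ := by simpa using huS
    have hstrict : ∑ y ∈ Sᶜ, t v y < (Sᶜ.card : ℝ) * (1/2) := by
      have : ∑ y ∈ Sᶜ, t v y < ∑ y ∈ Sᶜ, (1/2 : ℝ) := by
        refine Finset.sum_lt_sum (fun y hy => hcross v hvS y hy) ⟨u, huc, ?_⟩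
        have := (ht u v huv).2.2
        linarith
      calc ∑ y ∈ Sᶜ, t v y < ∑ y ∈ Sᶜ, (1/2:ℝ) := this
        _ = _ := by simp
    calc ∑ x ∈ S, ∑ y ∈ Sᶜ, t x y
        < ∑ x ∈ S, ((Sᶜ.card : ℝ) * (1/2)) := by
          refine Finset.sum_lt_sum hbound ⟨v, hvS, hstrict⟩
      _ = (S.card : ℝ) * ((Sᶜ.card : ℝ) * (1/2)) := by simp [mul_comm]
  have hcardc : (Sᶜ.card : ℝ) = (Fintype.card X : ℝ) - S.card := by
    rw [Finset.card_compl]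
    have : S.card ≤ Fintype.card X := Finset.card_le_univ S
    push_cast [Nat.cast_sub this]
    ring
  rw [hIC] at hA
  nlinarith [h2I, hC, hA, hcardc]

end Aux

theorem stmt12 [Fintype X] (hcard : 3 ≤ Fintype.card X)
    (t : X → X → ℝ) (ht : IsWeighted t) (hbal : BalancedW t)
    (u v : X) (huv : u ≠ v) (htuv : 1 / 2 < t u v) :
    ∃ k : ℕ, 3 ≤ k ∧ ∃ xs : ℕ → X,
      (∀ i < k, ∀ j < k, xs i = xs j → i = j) ∧
      xs 0 = u ∧ xs 1 = v ∧
      (∀ i, i + 1 < k → 1 / 2 < t (xs i) (xs (i + 1))) ∧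
      1 / 2 < t (xs (k - 1)) (xs 0) := by
  classical
  set R : X → X → Prop := fun x y => x ≠ y ∧ 1 / 2 < t x y with hR
  have hreach := reach_aux t ht hbal u v huv htuv
  obtain ⟨l, hch, hlast⟩ := List.exists_isChain_cons_of_relationReflTransGen hreach
  have hul : u ∈ l := by
    have hmem : u ∈ v :: l := hlast ▸ List.getLast_mem _
    rcases List.mem_cons.mp hmem with h | h
    · exact absurd h huv
    · exact h
  obtain ⟨s, t', rfl, hus⟩ := mem_first_split hul
  have hch1 : List.Chain R v (s ++ [u]) := (List.isChain_cons_split.mp hch).1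
  obtain ⟨m, hchm, hnd⟩ := chain_dedup u s.length v s huv.symm le_rfl hus hch1
  have hmne : m ≠ [] := by
    rintro rfl
    simp only [List.nil_append] at hchm
    have : R v u := (List.chain_cons.mp hchm).1
    have h1 := (ht u v huv).2.2
    have := this.2
    linarith
  set L : List X := u :: v :: m with hL
  have hLnd : L.Nodup := by
    have h1 := List.nodup_cons.mp hnd
    have hvm : v ∉ m := fun h => h1.1 (by simp [h])
    have hnd2 := h1.2
    rw [List.nodup_append] at hnd2
    have hum : u ∉ m := fun h => hnd2.2.2 u h u (by simp) rfl
    refine List.nodup_cons.mpr ⟨?_, List.nodup_cons.mpr ⟨hvm, hnd2.1⟩⟩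
    simp only [List.mem_cons]
    rintro (rfl | h)
    · exact huv rfl
    · exact hum h
  have hchm' : List.Chain R v m := by
    have hpre : List.Chain' R (v :: m) := by
      have : List.Chain' R (v :: (m ++ [u])) := hchm
      exact List.IsChain.prefix this (by
        rw [show v :: (m ++ [u]) = (v :: m) ++ [u] by simp]
        exact List.prefix_append _ _)
    exact hpre
  have hchL : List.Chain' R L := List.Chain.cons ⟨huv, htuv⟩ hchm'
  have hclose : R ((v :: m).getLast (List.cons_ne_nil _ _)) u := by
    have h : List.Chain' R ((v :: m) ++ [u]) := by
      rw [List.cons_append]; exact hchm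
    have := (List.isChain_append.mp h).2.2
    exact this _ (by rw [List.getLast?_eq_getLast (List.cons_ne_nil _ _)]; rfl) u rfl
  have hmpos : 0 < m.length := List.length_pos_iff.mpr hmne
  refine ⟨L.length, by simp only [hL, List.length_cons]; omega, fun i => L.getD i u, ?_, ?_, ?_, ?_, ?_⟩
  · intro i hi j hj hij
    have hij' : L.getD i u = L.getD j u := hij
    rw [List.getD_eq_getElem _ _ hi, List.getD_eq_getElem _ _ hj] at hij' 
    have := List.nodup_iff_injective_get.mp hLnd
      (show L.get ⟨i, hi⟩ = L.get ⟨j, hj⟩ from hij')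
    exact Fin.mk.inj_iff.mp this
  · simp [hL]
  · simp [hL]
  · intro i hi
    have hi' : i < L.length - 1 := by omega
    have := List.isChain_iff_getElem.mp hchL i (by omega)
    show 1 / 2 < t (L.getD i u) (L.getD (i + 1) u)
    rw [List.getD_eq_getElem _ _ (by omega : i < L.length),
      List.getD_eq_getElem _ _ (by omega : i + 1 < L.length)]
    exact this.2
  · have hk1 : L.length - 1 < L.length := by simp [hL]
    show 1 / 2 < t (L.getD (L.length - 1) u) (L.getD 0 u)
    rw [List.getD_eq_getElem _ _ hk1, List.getD_eq_getElem _ _ (by simp [hL] : 0 < L.length)]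
    have hlastL : L[L.length - 1] = (v :: m).getLast (List.cons_ne_nil _ _) := by
      rw [← List.getLast_eq_getElem]
      exact List.getLast_cons (List.cons_ne_nil _ _)
    rw [hlastL]
    have h0 : L[(0:ℕ)] = u := rfl
    rw [h0]
    exact hclose.2
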